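/- Let d ≥ 1 and N ≥ 2. Let m_ν (resp. m_α) denote the multiplicities of irreducible representations in the decomposition of the permutation action of S(N) on (ℂ^d)^{⊗N} (resp. of S(N-1) on (ℂ^d)^{⊗(N-1)}). Then ∑_{ν ⊢ N, height(ν) ≤ d} m_ν² = ((d² + N - 1)/N) · ∑_{α ⊢ N-1, height(α) ≤ d} m_α². -/

import Mathlib

open CategoryTheory

/-- Number of cycles of a permutation, counting fixed points as 1-cycles. -/
def cycleCount {α : Type*} [Fintype α] [DecidableEq α] (σ : Equiv.Perm α) : ℕ :=
  σ.cycleType.card + (Fintype.card α - σ.support.card)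

open Equiv Equiv.Perm in
lemma cycleCount_swap_mul {α : Type*} [Fintype α] [DecidableEq α] (f : Equiv.Perm α) (x : α)
    (hx : f x ≠ x) : cycleCount (Equiv.swap x (f x) * f) = cycleCount f + 1 := by
  classical
  set c := f.cycleOf x with hc_def
  have hc : c.IsCycle := f.isCycle_cycleOf hx
  have hcx : c x = f x := f.cycleOf_apply_self x
  have hcxx : c x ≠ x := by rw [hcx]; exact hx
  set g : Perm α := c⁻¹ * f with hg_def
  have hfc : c * g = f := by rw [hg_def]; group
  have hdisj : c.Disjoint g := by
    intro y
    by_cases h : f.SameCycle x y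
    · right
      have hcy : c y = f y := h.cycleOf_apply
      rw [hg_def]
      simp [Perm.mul_apply, ← hcy]
    · left; exact f.cycleOf_apply_of_not_sameCycle h
  have hsum : f.support.card = c.support.card + g.support.card := by
    rw [← hfc, hdisj.card_support_mul]
  have hfn : f.support.card ≤ Fintype.card α := f.support.card_le_univ
  have hxc : x ∈ c.support := by rw [Equiv.Perm.mem_support]; exact hcxx
  have hctf : f.cycleType.card = 1 + g.cycleType.card := by
    rw [← hfc, hdisj.cycleType_mul, Multiset.card_add, hc.cycleType]
    simp
  have hstep : Equiv.swap x (f x) * f = (Equiv.swap x (c x) * c) * g := by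
    rw [hcx, mul_assoc, hfc]
  rw [hstep]
  by_cases hcc : c (c x) = x
  · have hsw : c = Equiv.swap x (c x) := hc.eq_swap_of_apply_apply_eq_self hcxx hcc
    have h1 : Equiv.swap x (c x) * c = 1 := by
      nth_rewrite 2 [hsw]; rw [Equiv.swap_mul_self]
    have hk : c.support.card = 2 := by
      rw [hsw]; exact Equiv.Perm.card_support_swap (Ne.symm hcxx)
    rw [h1, one_mul]
    unfold cycleCount
    omega
  · have hc₂ : (Equiv.swap x (c x) * c).IsCycle := hc.swap_mul hcxx hcc
    have hsupp₂ : (Equiv.swap x (c x) * c).support = c.support \ {x} :=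
      Equiv.Perm.support_swap_mul_eq c x hcc
    have hcard₂ : (Equiv.swap x (c x) * c).support.card = c.support.card - 1 := by
      rw [hsupp₂, Finset.card_sdiff_of_subset (by simpa using hxc)]
      simp
    have hdisj₂ : (Equiv.swap x (c x) * c).Disjoint g := by
      rw [Equiv.Perm.disjoint_iff_disjoint_support] at hdisj ⊢
      exact hdisj.mono_left (by rw [hsupp₂]; exact Finset.sdiff_subset)
    have h3 : 2 ≤ (Equiv.swap x (c x) * c).support.card := hc₂.two_le_card_support
    unfold cycleCount
    rw [hdisj₂.cycleType_mul, Multiset.card_add, hc₂.cycleType, hdisj₂.card_support_mul, hcard₂]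
    simp only [Multiset.card_singleton]
    omega

open Equiv Equiv.Perm in
lemma decomposeFin_zero_eq_extendDomain {n : ℕ} (e : Perm (Fin n)) :
    Equiv.Perm.decomposeFin.symm (0, e) = e.extendDomain (finSuccAboveEquiv (0 : Fin (n+1))) := by
  refine Equiv.ext fun i => ?_
  refine Fin.cases ?_ (fun j => ?_) i
  · rw [decomposeFin_symm_apply_zero, Perm.extendDomain_apply_not_subtype]
    simp
  · rw [decomposeFin_symm_apply_succ]
    rw [Equiv.swap_self, Equiv.refl_apply]
    have hsub : j.succ ≠ (0 : Fin (n+1)) := Fin.succ_ne_zero j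
    rw [Perm.extendDomain_apply_subtype (b := j.succ) _ _ hsub]
    have h1 : (finSuccAboveEquiv (0 : Fin (n+1))).symm ⟨j.succ, hsub⟩ = j := by
      rw [Equiv.symm_apply_eq, finSuccAboveEquiv_apply]
      simp [Fin.zero_succAbove]
    rw [h1, finSuccAboveEquiv_apply]
    simp [Fin.zero_succAbove]

open Equiv Equiv.Perm in
lemma cycleCount_decomposeFin_zero {n : ℕ} (e : Perm (Fin n)) :
    cycleCount (Equiv.Perm.decomposeFin.symm (0, e)) = cycleCount e + 1 := by
  have hct : (Equiv.Perm.decomposeFin.symm (0, e)).cycleType = e.cycleType := by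
    rw [decomposeFin_zero_eq_extendDomain, Equiv.Perm.cycleType_extendDomain]
  have hsupp : (Equiv.Perm.decomposeFin.symm (0, e)).support.card = e.support.card := by
    rw [← Equiv.Perm.sum_cycleType, hct, Equiv.Perm.sum_cycleType]
  have hle : e.support.card ≤ n := by
    simpa using e.support.card_le_univ
  unfold cycleCount
  rw [hct, hsupp]
  simp only [Fintype.card_fin]
  omega

open Equiv Equiv.Perm in
lemma cycleCount_decomposeFin_succ {n : ℕ} (i : Fin n) (τ : Perm (Fin n)) :
    cycleCount (Equiv.Perm.decomposeFin.symm (i.succ, τ)) = cycleCount τ := by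
  have h0 : Equiv.Perm.decomposeFin.symm (i.succ, τ) 0 = i.succ :=
    decomposeFin_symm_apply_zero i.succ τ
  have h := cycleCount_swap_mul (Equiv.Perm.decomposeFin.symm (i.succ, τ)) 0
    (by rw [h0]; exact Fin.succ_ne_zero i)
  rw [h0] at h
  have hkey : Equiv.swap 0 i.succ * Equiv.Perm.decomposeFin.symm (i.succ, τ)
      = Equiv.Perm.decomposeFin.symm (0, τ) := by
    refine Equiv.ext fun x => ?_
    refine Fin.cases ?_ (fun j => ?_) x <;>
      simp [Perm.mul_apply, Equiv.swap_apply_self]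
  rw [hkey, cycleCount_decomposeFin_zero] at h
  omega

open Equiv Equiv.Perm in
lemma sum_pow_cycleCount_succ (n e : ℕ) :
    ∑ σ : Perm (Fin (n+1)), e ^ cycleCount σ
      = (e + n) * ∑ τ : Perm (Fin n), e ^ cycleCount τ := by
  rw [Finset.univ_perm_fin_succ, Finset.sum_map, Fintype.sum_prod_type, Fin.sum_univ_succ]
  have h1 : ∀ τ : Perm (Fin n),
      e ^ cycleCount (Equiv.Perm.decomposeFin.symm.toEmbedding (0, τ))
        = e * e ^ cycleCount τ := by
    intro τ
    simp only [Equiv.toEmbedding_apply]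
    rw [cycleCount_decomposeFin_zero, pow_succ, mul_comm]
  have h2 : ∀ (i : Fin n) (τ : Perm (Fin n)),
      e ^ cycleCount (Equiv.Perm.decomposeFin.symm.toEmbedding (i.succ, τ))
        = e ^ cycleCount τ := by
    intro i τ
    simp only [Equiv.toEmbedding_apply]
    rw [cycleCount_decomposeFin_succ]
  simp only [h1, h2]
  rw [← Finset.mul_sum, Finset.sum_const, Finset.card_univ, Fintype.card_fin, nsmul_eq_mul,
    add_mul]
  push_cast
  ring

open CategoryTheory in
lemma sum_char_sq {X : Type} [Group X] [Fintype X] {ι : Type} [Fintype ι]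
    (W : ι → FDRep ℂ X) [∀ i, Simple (W i)] (hdist : ∀ i j, i ≠ j → ¬Nonempty (W i ≅ W j))
    (m : ι → ℕ) (V : FDRep ℂ X)
    (hdecomp : ∀ σ : X, V.character σ = ∑ i, (m i : ℂ) * (W i).character σ) :
    ∑ σ : X, V.character σ * V.character σ⁻¹
      = (Fintype.card X : ℂ) * ∑ i, (m i : ℂ) ^ 2 := by
  classical
  have hcard : (Fintype.card X : ℂ) ≠ 0 := Nat.cast_ne_zero.mpr Fintype.card_ne_zero
  letI : Invertible ((Fintype.card X : ℂ)) := invertibleOfNonzero hcard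
  have key : ∀ i j : ι, ∑ g : X, (W i).character g * (W j).character g⁻¹
      = if i = j then (Fintype.card X : ℂ) else 0 := by
    intro i j
    letI : Fintype X := ‹Fintype X›
    letI : Invertible ((Nat.card X : ℂ)) := invertibleOfNonzero (by rwa [Nat.card_eq_fintype_card])
    have h := FDRep.char_orthonormal (k := ℂ) (G := X) (W i) (W j)
    have hiso : Nonempty (W i ≅ W j) ↔ i = j := by
      constructor
      · intro hne
        by_contra hij
        exact hdist i j hij hne
      · rintro rfl
        exact ⟨Iso.refl _⟩
    have hcc : Nat.card X = Fintype.card X := Nat.card_eq_fintype_card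
    rw [hcc, hiso] at h
    have h3 : ∑ g : X, (W i).character g * (W j).character g⁻¹
        = if i = j then (Fintype.card X : ℂ) else 0 := by
      have h2 := congrArg (fun z => (Fintype.card X : ℂ) * z) h
      rw [← mul_assoc, mul_inv_cancel₀ hcard, one_mul] at h2
      rw [h2]
      split_ifs <;> simp
    exact h3
  have expand : ∀ g : X, V.character g * V.character g⁻¹
      = ∑ i, ∑ j, ((m i : ℂ) * (m j : ℂ)) * ((W i).character g * (W j).character g⁻¹) := by
    intro g
    rw [hdecomp g, hdecomp g⁻¹, Finset.sum_mul_sum]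
    refine Finset.sum_congr rfl fun i _ => Finset.sum_congr rfl fun j _ => by ring
  calc ∑ g : X, V.character g * V.character g⁻¹
      = ∑ g : X, ∑ i, ∑ j, ((m i : ℂ) * (m j : ℂ)) * ((W i).character g * (W j).character g⁻¹) :=
        Finset.sum_congr rfl fun g _ => expand g
    _ = ∑ i, ∑ j, ((m i : ℂ) * (m j : ℂ)) * ∑ g : X, (W i).character g * (W j).character g⁻¹ := by
        rw [Finset.sum_comm]
        refine Finset.sum_congr rfl fun i _ => ?_
        rw [Finset.sum_comm]
        refine Finset.sum_congr rfl fun j _ => ?_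
        rw [Finset.mul_sum]
    _ = ∑ i, ((m i : ℂ) * (m i : ℂ)) * (Fintype.card X : ℂ) := by
        refine Finset.sum_congr rfl fun i _ => ?_
        simp only [key, mul_ite, mul_zero]
        rw [Finset.sum_ite_eq]
        simp
    _ = (Fintype.card X : ℂ) * ∑ i, (m i : ℂ) ^ 2 := by
        rw [Finset.mul_sum]
        refine Finset.sum_congr rfl fun i _ => by ring

lemma cycleCount_inv {α : Type*} [Fintype α] [DecidableEq α] (σ : Equiv.Perm α) :
    cycleCount σ⁻¹ = cycleCount σ := by
  unfold cycleCount
  rw [Equiv.Perm.cycleType_inv, Equiv.Perm.support_inv]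


/-- If `V` (resp. `V'`) is the permutation representation of `S(N)` on `(ℂ^d)^{⊗N}`
(resp. of `S(N-1)` on `(ℂ^d)^{⊗(N-1)}`), characterized by character `σ ↦ d^{l(σ)}`, with
decompositions into pairwise non-isomorphic irreducibles with multiplicities `m` (resp. `m'`),
then `∑ m_ν² = ((d² + N - 1)/N) · ∑ m'_α²`. -/
theorem stmt5 (d N : ℕ) (hd : 1 ≤ d) (hN : 2 ≤ N)
    {ι : Type} [Fintype ι] (W : ι → FDRep ℂ (Equiv.Perm (Fin N)))
    [∀ i, Simple (W i)] (hdist : ∀ i j, i ≠ j → ¬Nonempty (W i ≅ W j))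
    (m : ι → ℕ) (V : FDRep ℂ (Equiv.Perm (Fin N)))
    (hchar : ∀ σ : Equiv.Perm (Fin N), V.character σ = (d : ℂ) ^ cycleCount σ)
    (hdecomp : ∀ σ : Equiv.Perm (Fin N),
      V.character σ = ∑ i, (m i : ℂ) * (W i).character σ)
    {κ : Type} [Fintype κ] (W' : κ → FDRep ℂ (Equiv.Perm (Fin (N - 1))))
    [∀ j, Simple (W' j)] (hdist' : ∀ i j, i ≠ j → ¬Nonempty (W' i ≅ W' j))
    (m' : κ → ℕ) (V' : FDRep ℂ (Equiv.Perm (Fin (N - 1))))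
    (hchar' : ∀ π : Equiv.Perm (Fin (N - 1)), V'.character π = (d : ℂ) ^ cycleCount π)
    (hdecomp' : ∀ π : Equiv.Perm (Fin (N - 1)),
      V'.character π = ∑ j, (m' j : ℂ) * (W' j).character π) :
    (∑ i, ((m i : ℂ)) ^ 2)
      = (((d : ℂ) ^ 2 + N - 1) / N) * ∑ j, ((m' j : ℂ)) ^ 2 := by
  obtain ⟨n, rfl⟩ : ∃ n, N = n + 1 := ⟨N - 1, by omega⟩
  -- abbreviations
  set A : ℂ := ∑ i, ((m i : ℂ)) ^ 2 with hA_def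
  set B : ℂ := ∑ j, ((m' j : ℂ)) ^ 2 with hB_def
  -- character sums
  have hchar2 : ∀ σ : Equiv.Perm (Fin (n+1)), V.character σ * V.character σ⁻¹
      = ((d ^ 2 : ℕ) : ℂ) ^ cycleCount σ := by
    intro σ
    rw [hchar σ, hchar σ⁻¹, cycleCount_inv]
    push_cast
    ring
  have hchar2' : ∀ π : Equiv.Perm (Fin n), V'.character π * V'.character π⁻¹
      = ((d ^ 2 : ℕ) : ℂ) ^ cycleCount π := by
    intro π
    rw [hchar' π, hchar' π⁻¹, cycleCount_inv]
    push_cast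
    ring
  have hA : (((n+1).factorial : ℕ) : ℂ) * A
      = ((∑ σ : Equiv.Perm (Fin (n+1)), (d ^ 2) ^ cycleCount σ : ℕ) : ℂ) := by
    have h0 := sum_char_sq W hdist m V hdecomp
    have hcard : Fintype.card (Equiv.Perm (Fin (n+1))) = (n+1).factorial := by
      rw [Fintype.card_perm, Fintype.card_fin]
    rw [hcard] at h0
    rw [← h0, Nat.cast_sum]
    refine Finset.sum_congr rfl fun σ _ => ?_
    rw [hchar2 σ]
    push_cast
    ring
  have hB : ((n.factorial : ℕ) : ℂ) * B
      = ((∑ π : Equiv.Perm (Fin n), (d ^ 2) ^ cycleCount π : ℕ) : ℂ) := by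
    have h0 := sum_char_sq W' hdist' m' V' hdecomp'
    have hcard : Fintype.card (Equiv.Perm (Fin (n + 1 - 1))) = n.factorial := by
      rw [Fintype.card_perm, Fintype.card_fin]
      simp
    rw [hcard] at h0
    rw [← h0, Nat.cast_sum]
    refine Finset.sum_congr rfl fun π _ => ?_
    rw [hchar2' π]
    push_cast
    ring
  have hkey : (∑ σ : Equiv.Perm (Fin (n+1)), (d ^ 2) ^ cycleCount σ : ℕ)
      = (d ^ 2 + n) * ∑ π : Equiv.Perm (Fin n), (d ^ 2) ^ cycleCount π :=
    sum_pow_cycleCount_succ n (d ^ 2)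
  -- final algebra
  have hN0 : ((n : ℂ) + 1) ≠ 0 := Nat.cast_add_one_ne_zero n
  have hf0 : ((n.factorial : ℕ) : ℂ) ≠ 0 :=
    Nat.cast_ne_zero.mpr n.factorial_ne_zero
  have hfacs : (((n+1).factorial : ℕ) : ℂ) = ((n:ℂ) + 1) * ((n.factorial : ℕ) : ℂ) := by
    rw [Nat.factorial_succ]
    push_cast
    ring
  have hC : ((d ^ 2 + n : ℕ) : ℂ) = (d : ℂ) ^ 2 + ((n : ℕ) + 1 : ℕ) - 1 := by
    push_cast
    ring
  have h1 : ((n:ℂ) + 1) * ((n.factorial : ℕ) : ℂ) * A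
      = ((d : ℂ) ^ 2 + ((n : ℂ) + 1) - 1) * (((n.factorial : ℕ) : ℂ) * B) := by
    rw [← hfacs, hA, hkey, hB]
    push_cast
    ring
  have h2 : ((n.factorial : ℕ) : ℂ) * (((n:ℂ) + 1) * A)
      = ((n.factorial : ℕ) : ℂ) * (((d : ℂ) ^ 2 + ((n : ℂ) + 1) - 1) * B) := by
    linear_combination h1
  have h3 := mul_left_cancel₀ hf0 h2
  have hcast : ((n + 1 : ℕ) : ℂ) = (n : ℂ) + 1 := by push_cast; ring
  rw [hcast, div_mul_eq_mul_div, eq_div_iff hN0]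
  linear_combination h3
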